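/- Let Ω ⊂ ℂ be a nonempty bounded open set, let k : Ω → ℝ be continuous with k > 0 everywhere on Ω, and let μ : closure(Ω) → ℂ be continuous and twice continuously differentiable on Ω, satisfying Δμ = k·μ on Ω (with Δ applied to real and imaginary parts separately). Then the supremum of |μ| over closure(Ω) equals the supremum of |μ| over the boundary ∂Ω; in particular |μ(z)| ≤ sup_{w ∈ ∂Ω} |μ(w)| for all z ∈ closure(Ω). -/

import Mathlib

/-- Directional derivative of `f : ℂ → E` at `z` in the direction `v ∈ ℂ`. -/
noncomputable def dirDeriv {E : Type*} [NormedAddCommGroup E] [NormedSpace ℝ E]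
    (v : ℂ) (f : ℂ → E) (z : ℂ) : E :=
  deriv (fun t : ℝ => f (z + t • v)) 0

/-- The flat Laplacian `Δf = ∂²f/∂x² + ∂²f/∂y²` of a function on `ℂ ≅ ℝ²`
(applied componentwise when the target is `ℂ`). -/
noncomputable def flatLaplacian {E : Type*} [NormedAddCommGroup E] [NormedSpace ℝ E]
    (f : ℂ → E) (z : ℂ) : E :=
  dirDeriv 1 (dirDeriv 1 f) z + dirDeriv Complex.I (dirDeriv Complex.I f) z

open Set Filter Topology

lemma dirDeriv_line (v : ℂ) (f : ℂ → ℂ) (z₀ : ℂ) (t : ℝ) :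
    dirDeriv v f (z₀ + t • v) = deriv (fun s : ℝ => f (z₀ + s • v)) t := by
  unfold dirDeriv
  have h : (fun s : ℝ => f (z₀ + t • v + s • v)) = (fun s : ℝ => f (z₀ + (s + t) • v)) := by
    funext s; congr 1; rw [add_smul]; ring
  rw [h, deriv_comp_add_const (fun s : ℝ => f (z₀ + s • v)) t 0, zero_add]

lemma key1d {φ : ℝ → ℝ} {S : Set ℝ} (hS : IsOpen S) (h0 : (0:ℝ) ∈ S)
    (hdiff : ∀ t ∈ S, HasDerivAt φ (deriv φ t) t)
    (hmax : IsLocalMax φ 0) {D : ℝ} (hD : HasDerivAt (deriv φ) D 0) : D ≤ 0 := by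
  by_contra hc
  push_neg at hc
  have h0' : deriv φ 0 = 0 := hmax.deriv_eq_zero
  have hslope : Tendsto (slope (deriv φ) 0) (𝓝[≠] 0) (𝓝 D) :=
    hasDerivAt_iff_tendsto_slope.mp hD
  have h1 : ∀ᶠ t in 𝓝[>] (0:ℝ), 0 < slope (deriv φ) 0 t :=
    ((hslope.mono_left (nhdsWithin_mono _ (fun t ht => ne_of_gt ht))).eventually
      (eventually_gt_nhds hc))
  have h2 : ∀ᶠ t in 𝓝[>] (0:ℝ), 0 < deriv φ t := by
    filter_upwards [h1, self_mem_nhdsWithin] with t ht ht'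
    have hs : slope (deriv φ) 0 t = deriv φ t / t := by
      rw [slope_def_field, h0']; simp
    rw [hs] at ht
    rcases div_pos_iff.mp ht with ⟨h, _⟩ | ⟨_, h⟩
    · exact h
    · exact absurd (ht' : (0:ℝ) < t) (not_lt.mpr h.le)
  have h3 : ∀ᶠ t in 𝓝[>] (0:ℝ), t ∈ S ∧ φ t ≤ φ 0 :=
    mem_nhdsWithin_of_mem_nhds (Filter.inter_mem (hS.mem_nhds h0) hmax)
  obtain ⟨ε, hε, hIoc⟩ := mem_nhdsGT_iff_exists_Ioc_subset.mp (h2.and h3)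
  have hε' : (0:ℝ) < ε := hε
  have hmem : ∀ t ∈ Icc (0:ℝ) ε, t ∈ S := by
    intro t ht
    rcases eq_or_lt_of_le ht.1 with h | h
    · exact h ▸ h0
    · exact (hIoc ⟨h, ht.2⟩).2.1
  have hcont : ContinuousOn φ (Icc 0 ε) := fun t ht =>
    (hdiff t (hmem t ht)).continuousAt.continuousWithinAt
  obtain ⟨c, hc', hceq⟩ := exists_hasDerivAt_eq_slope φ (deriv φ) hε hcont
    (fun t ht => hdiff t (hmem t ⟨ht.1.le, ht.2.le⟩))
  have hpos : 0 < deriv φ c := (hIoc ⟨hc'.1, hc'.2.le⟩).1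
  have hle : φ ε ≤ φ 0 := (hIoc ⟨hε, le_rfl⟩).2.2
  rw [hceq] at hpos
  have : (φ ε - φ 0) / (ε - 0) ≤ 0 :=
    div_nonpos_of_nonpos_of_nonneg (by linarith) (by linarith)
  linarith

lemma biSup_eq {s : Set ℂ} {f : ℂ → ℝ} (hf0 : ∀ y, 0 ≤ f y) {x : ℂ} (hx : x ∈ s)
    (h : ∀ y ∈ s, f y ≤ f x) : (⨆ y ∈ s, f y) = f x := by
  apply le_antisymm
  · exact Real.iSup_le (fun y => Real.iSup_le (fun hy => h y hy) (hf0 x)) (hf0 x)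
  · have hb : BddAbove (Set.range fun y => ⨆ _ : y ∈ s, f y) := by
      refine ⟨f x, ?_⟩
      rintro r ⟨y, rfl⟩
      exact Real.iSup_le (fun hy => h y hy) (hf0 x)
    calc f x = ⨆ _ : x ∈ s, f x := (ciSup_pos (f := fun _ : x ∈ s => f x) hx).symm
    _ ≤ ⨆ y ∈ s, f y := le_ciSup hb x

lemma line_data {Ω : Set ℂ} (hΩopen : IsOpen Ω) {μ : ℂ → ℂ} (hμ_C2 : ContDiffOn ℝ 2 μ Ω)
    (v z₀ : ℂ) (hz₀ : z₀ ∈ Ω) :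
    ∃ D : ℝ,
      HasDerivAt (deriv (fun t : ℝ => Complex.normSq (μ (z₀ + t • v)))) D 0 ∧
      (∀ t ∈ (fun t : ℝ => z₀ + t • v) ⁻¹' Ω,
        HasDerivAt (fun t : ℝ => Complex.normSq (μ (z₀ + t • v)))
          (deriv (fun t : ℝ => Complex.normSq (μ (z₀ + t • v))) t) t) ∧
      2 * ((μ z₀).re * (dirDeriv v (dirDeriv v μ) z₀).re
          + (μ z₀).im * (dirDeriv v (dirDeriv v μ) z₀).im) ≤ D := by
  set L : ℝ → ℂ := fun t => z₀ + t • v with hLdef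
  set S : Set ℝ := L ⁻¹' Ω with hSdef
  have hLcont : Continuous L := continuous_const.add (continuous_id.smul continuous_const)
  have hSopen : IsOpen S := hΩopen.preimage hLcont
  have h0S : (0:ℝ) ∈ S := by simp [hSdef, hLdef, hz₀]
  have hL : ContDiff ℝ 2 L := contDiff_const.add (contDiff_id.smul contDiff_const)
  set ψ : ℝ → ℂ := fun t => μ (L t) with hψdef
  have hψ : ContDiffOn ℝ 2 ψ S := hμ_C2.comp hL.contDiffOn (fun t ht => ht)
  have hψ1 : ∀ t ∈ S, HasDerivAt ψ (deriv ψ t) t := fun t ht =>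
    ((hψ.differentiableOn (by norm_num)).differentiableAt (hSopen.mem_nhds ht)).hasDerivAt
  have hψd : ContDiffOn ℝ 1 (deriv ψ) S := hψ.deriv_of_isOpen hSopen (by norm_num)
  have hψ2 : HasDerivAt (deriv ψ) (deriv (deriv ψ) 0) 0 :=
    ((hψd.differentiableOn (by norm_num)).differentiableAt (hSopen.mem_nhds h0S)).hasDerivAt
  set A : ℂ := deriv (deriv ψ) 0 with hAdef
  have hre : ∀ {g : ℝ → ℂ} {g' : ℂ} {t : ℝ}, HasDerivAt g g' t →
      HasDerivAt (fun t => (g t).re) g'.re t := fun hg =>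
    Complex.reCLM.hasFDerivAt.comp_hasDerivAt _ hg
  have him : ∀ {g : ℝ → ℂ} {g' : ℂ} {t : ℝ}, HasDerivAt g g' t →
      HasDerivAt (fun t => (g t).im) g'.im t := fun hg =>
    Complex.imCLM.hasFDerivAt.comp_hasDerivAt _ hg
  set φ : ℝ → ℝ := fun t => Complex.normSq (μ (z₀ + t • v)) with hφdef
  have hφψ : φ = fun t => (ψ t).re * (ψ t).re + (ψ t).im * (ψ t).im := by
    funext t; simp [hφdef, hψdef, hLdef, Complex.normSq_apply]
  set F : ℝ → ℝ := fun t => ((deriv ψ t).re * (ψ t).re + (ψ t).re * (deriv ψ t).re)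
      + ((deriv ψ t).im * (ψ t).im + (ψ t).im * (deriv ψ t).im) with hFdef
  have hφ : ∀ t ∈ S, HasDerivAt φ (F t) t := by
    intro t ht
    rw [hφψ]
    exact ((hre (hψ1 t ht)).mul (hre (hψ1 t ht))).add ((him (hψ1 t ht)).mul (him (hψ1 t ht)))
  have hdφ : ∀ t ∈ S, deriv φ t = F t := fun t ht => (hφ t ht).deriv
  set p : ℝ := (deriv ψ 0).re with hpdef
  set q : ℝ := (deriv ψ 0).im with hqdef
  have hu0 : HasDerivAt (fun t => (ψ t).re) p 0 := hre (hψ1 0 h0S)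
  have hw0 : HasDerivAt (fun t => (ψ t).im) q 0 := him (hψ1 0 h0S)
  have hu1 : HasDerivAt (fun t => (deriv ψ t).re) A.re 0 := hre hψ2
  have hw1 : HasDerivAt (fun t => (deriv ψ t).im) A.im 0 := him hψ2
  have hF : HasDerivAt F ((A.re * (ψ 0).re + p * p + (p * p + (ψ 0).re * A.re))
      + (A.im * (ψ 0).im + q * q + (q * q + (ψ 0).im * A.im))) 0 :=
    ((hu1.mul hu0).add (hu0.mul hu1)).add ((hw1.mul hw0).add (hw0.mul hw1))
  have heq : deriv φ =ᶠ[𝓝 (0:ℝ)] F := eventuallyEq_of_mem (hSopen.mem_nhds h0S) hdφ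
  have hD : HasDerivAt (deriv φ) ((A.re * (ψ 0).re + p * p + (p * p + (ψ 0).re * A.re))
      + (A.im * (ψ 0).im + q * q + (q * q + (ψ 0).im * A.im))) 0 :=
    hF.congr_of_eventuallyEq heq
  have hψ00 : ψ 0 = μ z₀ := by simp [hψdef, hLdef]
  have hA : dirDeriv v (dirDeriv v μ) z₀ = A := by
    have h1 : (fun t : ℝ => dirDeriv v μ (z₀ + t • v)) = deriv ψ := by
      funext t; exact dirDeriv_line v μ z₀ t
    show deriv (fun t : ℝ => dirDeriv v μ (z₀ + t • v)) 0 = A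
    rw [h1]
  refine ⟨_, hD, fun t ht => hdφ t ht ▸ hφ t ht, ?_⟩
  rw [hA, hψ00]
  nlinarith [sq_nonneg p, sq_nonneg q]

lemma no_interior_max {Ω : Set ℂ} (hΩopen : IsOpen Ω)
    {k : ℂ → ℝ} (hk_pos : ∀ z ∈ Ω, 0 < k z)
    {μ : ℂ → ℂ} (hμ_C2 : ContDiffOn ℝ 2 μ Ω)
    (hμ_eq : ∀ z ∈ Ω, flatLaplacian μ z = (k z : ℂ) * μ z)
    {z₀ : ℂ} (hz₀ : z₀ ∈ Ω) (hne0 : μ z₀ ≠ 0)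
    (hmax : ∀ y ∈ Ω, Complex.normSq (μ y) ≤ Complex.normSq (μ z₀)) : False := by
  have hloc : ∀ v : ℂ, IsLocalMax (fun t : ℝ => Complex.normSq (μ (z₀ + t • v))) 0 := by
    intro v
    have hSopen : IsOpen ((fun t : ℝ => z₀ + t • v) ⁻¹' Ω) :=
      hΩopen.preimage (continuous_const.add (continuous_id.smul continuous_const))
    have h0S : (0:ℝ) ∈ (fun t : ℝ => z₀ + t • v) ⁻¹' Ω := by simp [hz₀]
    refine Filter.eventually_of_mem (hSopen.mem_nhds h0S) (fun t ht => ?_)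
    simpa using hmax _ ht
  have hSopen1 : IsOpen ((fun t : ℝ => z₀ + t • (1:ℂ)) ⁻¹' Ω) :=
    hΩopen.preimage (continuous_const.add (continuous_id.smul continuous_const))
  have hSopenI : IsOpen ((fun t : ℝ => z₀ + t • Complex.I) ⁻¹' Ω) :=
    hΩopen.preimage (continuous_const.add (continuous_id.smul continuous_const))
  have h0S1 : (0:ℝ) ∈ (fun t : ℝ => z₀ + t • (1:ℂ)) ⁻¹' Ω := by simp [hz₀]
  have h0SI : (0:ℝ) ∈ (fun t : ℝ => z₀ + t • Complex.I) ⁻¹' Ω := by simp [hz₀]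
  obtain ⟨D1, hD1, hdiff1, hle1⟩ := line_data hΩopen hμ_C2 1 z₀ hz₀
  obtain ⟨D2, hD2, hdiff2, hle2⟩ := line_data hΩopen hμ_C2 Complex.I z₀ hz₀
  have hD1le : D1 ≤ 0 := key1d hSopen1 h0S1 hdiff1 (hloc 1) hD1
  have hD2le : D2 ≤ 0 := key1d hSopenI h0SI hdiff2 (hloc Complex.I) hD2
  -- sum of second directional derivatives
  set B1 : ℂ := dirDeriv 1 (dirDeriv 1 μ) z₀
  set B2 : ℂ := dirDeriv Complex.I (dirDeriv Complex.I μ) z₀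
  have hsum : B1 + B2 = (k z₀ : ℂ) * μ z₀ := hμ_eq z₀ hz₀
  have hre : B1.re + B2.re = k z₀ * (μ z₀).re := by
    have := congrArg Complex.re hsum
    simpa [Complex.add_re, Complex.mul_re] using this
  have him : B1.im + B2.im = k z₀ * (μ z₀).im := by
    have := congrArg Complex.im hsum
    simpa [Complex.add_im, Complex.mul_im] using this
  have hpos : 0 < 2 * (k z₀ * Complex.normSq (μ z₀)) :=
    mul_pos two_pos (mul_pos (hk_pos z₀ hz₀) (Complex.normSq_pos.mpr hne0))
  have hsum2 : 2 * (k z₀ * Complex.normSq (μ z₀)) ≤ D1 + D2 := by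
    have : (μ z₀).re * B1.re + (μ z₀).im * B1.im
        + ((μ z₀).re * B2.re + (μ z₀).im * B2.im)
        = k z₀ * Complex.normSq (μ z₀) := by
      calc (μ z₀).re * B1.re + (μ z₀).im * B1.im + ((μ z₀).re * B2.re + (μ z₀).im * B2.im)
          = (μ z₀).re * (B1.re + B2.re) + (μ z₀).im * (B1.im + B2.im) := by ring
        _ = k z₀ * Complex.normSq (μ z₀) := by
            rw [hre, him, Complex.normSq_apply]; ring
    nlinarith [hle1, hle2]
  linarith

/-- maximum principle for the homogeneous equation `Δμ = kμ`: if
`Ω ⊂ ℂ` is nonempty, bounded and open, `k > 0` continuous on `Ω`, and `μ` is continuous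
on `closure Ω`, `C²` on `Ω`, with `Δμ = kμ` on `Ω`, then `sup_{closure Ω} |μ| = sup_{∂Ω} |μ|`;
in particular `|μ| ≤ sup_{∂Ω} |μ|` on `closure Ω`. -/
theorem statement12 (Ω : Set ℂ) (hne : Ω.Nonempty) (hΩopen : IsOpen Ω)
    (hΩbdd : Bornology.IsBounded Ω)
    (k : ℂ → ℝ) (hk_cont : ContinuousOn k Ω) (hk_pos : ∀ z ∈ Ω, 0 < k z)
    (μ : ℂ → ℂ) (hμ_cont : ContinuousOn μ (closure Ω)) (hμ_C2 : ContDiffOn ℝ 2 μ Ω)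
    (hμ_eq : ∀ z ∈ Ω, flatLaplacian μ z = (k z : ℂ) * μ z) :
    (⨆ z ∈ closure Ω, ‖μ z‖) = (⨆ z ∈ frontier Ω, ‖μ z‖) ∧
    ∀ z ∈ closure Ω, ‖μ z‖ ≤ ⨆ y ∈ frontier Ω, ‖μ y‖ := by
  have hcompact : IsCompact (closure Ω) := hΩbdd.isCompact_closure
  have hclne : (closure Ω).Nonempty := hne.closure
  have habs : ContinuousOn (fun z => ‖μ z‖) (closure Ω) :=
    continuous_norm.comp_continuousOn hμ_cont
  obtain ⟨x₀, hx₀mem, hx₀max⟩ := hcompact.exists_isMaxOn hclne habs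
  have hx₀max' : ∀ y ∈ closure Ω, ‖μ y‖ ≤ ‖μ x₀‖ :=
    fun y hy => hx₀max hy
  have hfr : (frontier Ω).Nonempty := by
    rw [nonempty_frontier_iff]
    refine ⟨hne, fun h => ?_⟩
    rw [h] at hΩbdd
    exact (Metric.isBounded_iff.mp hΩbdd).elim (fun C hC => by
      have h0 : (0:ℝ) ≤ C := by simpa using hC (Set.mem_univ (0:ℂ)) (Set.mem_univ (0:ℂ))
      have h1 := hC (Set.mem_univ (0:ℂ)) (Set.mem_univ ((C+1 : ℝ) : ℂ))
      rw [Complex.dist_eq] at h1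
      simp only [zero_sub, norm_neg, Complex.norm_real, Real.norm_eq_abs] at h1
      rw [abs_of_nonneg (by linarith)] at h1
      linarith)
  have key : ∃ x₁ ∈ frontier Ω, ∀ y ∈ closure Ω, ‖μ y‖ ≤ ‖μ x₁‖ := by
    by_cases hx₀fr : x₀ ∈ frontier Ω
    · exact ⟨x₀, hx₀fr, hx₀max'⟩
    · have hΩx : x₀ ∈ Ω := by
        by_contra h
        exact hx₀fr ⟨hx₀mem, by rwa [hΩopen.interior_eq]⟩
      by_cases hzero : μ x₀ = 0
      · obtain ⟨x₁, hx₁⟩ := hfr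
        refine ⟨x₁, hx₁, fun y hy => ?_⟩
        have := hx₀max' y hy
        rw [hzero] at this
        simp only [norm_zero] at this
        exact this.trans (norm_nonneg _)
      · exfalso
        refine no_interior_max hΩopen hk_pos hμ_C2 hμ_eq hΩx hzero (fun y hy => ?_)
        have h1 := hx₀max' y (subset_closure hy)
        rw [← Complex.sq_norm, ← Complex.sq_norm]
        exact pow_le_pow_left₀ (norm_nonneg _) h1 2
  obtain ⟨x₁, hx₁fr, hx₁max⟩ := key
  have hx₁cl : x₁ ∈ closure Ω := frontier_subset_closure hx₁fr
  have h0 : ∀ y, 0 ≤ ‖μ y‖ := fun y => norm_nonneg _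
  have e1 : (⨆ z ∈ closure Ω, ‖μ z‖) = ‖μ x₁‖ :=
    biSup_eq h0 hx₁cl hx₁max
  have e2 : (⨆ z ∈ frontier Ω, ‖μ z‖) = ‖μ x₁‖ :=
    biSup_eq h0 hx₁fr (fun y hy => hx₁max y (frontier_subset_closure hy))
  refine ⟨e1.trans e2.symm, fun z hz => ?_⟩
  rw [e2]
  exact hx₁max z hz
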